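/- Let d ≥ 1, k ≥ 1, let V be a complex inner product space, and let Φ_{A,a} (A ∈ Fin k, a ∈ Fin d) be vectors in V satisfying the MUB Gram condition ⟨Φ_{A,a}, Φ_{A',a'}⟩ = δ_{A,A'}δ_{a,a'} + (1−δ_{A,A'})/d. Let ω = exp(2πi/d) and define Φ̂_{A,j} = (1/√d)·Σ_{a=0}^{d-1} ω^{a·j}·Φ_{A,a} for A ∈ Fin k and j ∈ Fin d. Then ⟨Φ̂_{A,j}, Φ̂_{A',j'}⟩ = δ_{A,A'}δ_{j,j'} + (1−δ_{A,A'})δ_{j,0}δ_{j',0} for all A, A' ∈ Fin k and j, j' ∈ Fin d. -/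

import Mathlib

open scoped InnerProductSpace

/-- **Orthogonality relation (Eq. (4) of the paper).** For vectors `Φ_{A,a}` with the
MUB Gram matrix, the Fourier-transformed vectors
`Φ̂_{A,j} = (1/√d)·Σ_a ω^{aj}·Φ_{A,a}` (with `ω = exp(2πi/d)`) satisfy
`⟪Φ̂_{A,j}, Φ̂_{A',j'}⟫ = δ_{A,A'}δ_{j,j'} + (1-δ_{A,A'})δ_{j,0}δ_{j',0}`. -/
theorem fourier_transformed_states_orthogonality
    (d k : ℕ) (hd : 1 ≤ d) (hk : 1 ≤ k)
    (V : Type*) [NormedAddCommGroup V] [InnerProductSpace ℂ V]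
    (Φ : Fin k → Fin d → V)
    (hGram : ∀ (A A' : Fin k) (a a' : Fin d),
      ⟪Φ A a, Φ A' a'⟫_ℂ =
        if A = A' then (if a = a' then 1 else 0) else 1 / (d : ℂ))
    (ω : ℂ) (hω : ω = Complex.exp (2 * Real.pi * Complex.I / d))
    (Φhat : Fin k → Fin d → V)
    (hΦhat : ∀ (A : Fin k) (j : Fin d),
      Φhat A j = (1 / Real.sqrt d : ℂ) • ∑ a : Fin d, ω ^ ((a : ℕ) * (j : ℕ)) • Φ A a) :
    ∀ (A A' : Fin k) (j j' : Fin d),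
      ⟪Φhat A j, Φhat A' j'⟫_ℂ =
        if A = A' then (if j = j' then 1 else 0)
        else (if (j : ℕ) = 0 ∧ (j' : ℕ) = 0 then 1 else 0) := by
  have hd0 : d ≠ 0 := by omega
  have hprim : IsPrimitiveRoot ω d := hω ▸ Complex.isPrimitiveRoot_exp d hd0
  have hωd : ω ^ d = 1 := hprim.pow_eq_one
  -- character sum
  have hsum : ∀ m : ℕ, ∑ a : Fin d, ω ^ ((a : ℕ) * m) = if d ∣ m then (d : ℂ) else 0 := by
    intro m
    have hpow : ∀ a : ℕ, ω ^ (a * m) = (ω ^ m) ^ a := fun a => by rw [mul_comm, pow_mul]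
    simp_rw [hpow, Fin.sum_univ_eq_sum_range]
    by_cases h : d ∣ m
    · rw [if_pos h, (hprim.pow_eq_one_iff_dvd m).mpr h]; simp
    · rw [if_neg h, geom_sum_eq (fun h1 => h ((hprim.pow_eq_one_iff_dvd m).mp h1))]
      rw [← pow_mul, mul_comm, pow_mul, hωd, one_pow, sub_self, zero_div]
  -- conjugation of powers of ω
  have habs : ‖ω‖ = 1 := Complex.norm_eq_one_of_pow_eq_one hωd hd0
  have hconj1 : (starRingEnd ℂ) ω = ω ^ (d - 1) := by
    rw [← Complex.inv_eq_conj habs]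
    refine inv_eq_of_mul_eq_one_right ?_
    rw [← pow_succ']
    have : d - 1 + 1 = d := by omega
    rw [this, hωd]
  have hconj : ∀ n : ℕ, (starRingEnd ℂ) (ω ^ n) = ω ^ ((d - 1) * n) := by
    intro n; rw [map_pow, hconj1, ← pow_mul]
  -- scalar bookkeeping
  have hc : (starRingEnd ℂ) (1 / (Real.sqrt d : ℂ)) * (1 / (Real.sqrt d : ℂ)) = 1 / (d : ℂ) := by
    rw [map_div₀, map_one, Complex.conj_ofReal, div_mul_div_comm, one_mul,
      ← Complex.ofReal_mul, Real.mul_self_sqrt (by positivity)]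
    push_cast
    ring
  intro A A' j j'
  rw [hΦhat, hΦhat, inner_smul_left, inner_smul_right, sum_inner]
  simp_rw [inner_sum, inner_smul_left, inner_smul_right, hGram, hconj]
  by_cases hA : A = A'
  · rw [if_pos hA]
    simp only [hA, if_true, mul_ite, mul_one, mul_zero, Finset.sum_ite_eq,
      Finset.sum_ite_eq', Finset.mem_univ, if_true]
    have hmerge : ∀ a : Fin d,
        ω ^ ((d - 1) * ((a : ℕ) * (j : ℕ))) * ω ^ ((a : ℕ) * (j' : ℕ))
          = ω ^ ((a : ℕ) * ((d - 1) * (j : ℕ) + (j' : ℕ))) := by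
      intro a; rw [← pow_add]; ring_nf
    rw [Finset.sum_congr rfl (fun a _ => hmerge a), hsum]
    have hiff : d ∣ (d - 1) * (j : ℕ) + (j' : ℕ) ↔ j = j' := by
      rw [← hprim.pow_eq_one_iff_dvd]
      constructor
      · intro h1
        have h2 : ω ^ ((j : ℕ) + ((d - 1) * (j : ℕ) + (j' : ℕ))) = ω ^ (j : ℕ) := by
          rw [pow_add, h1, mul_one]
        have h3 : (j : ℕ) + ((d - 1) * (j : ℕ) + (j' : ℕ)) = d * (j : ℕ) + (j' : ℕ) := by
          have h4 : (d - 1) * (j : ℕ) = d * (j : ℕ) - (j : ℕ) := Nat.sub_one_mul d (j : ℕ)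
          have hle : (j : ℕ) ≤ d * (j : ℕ) := Nat.le_mul_of_pos_left _ (by omega)
          omega
        rw [h3, pow_add, pow_mul, hωd, one_pow, one_mul] at h2
        exact (Fin.ext (hprim.pow_inj j'.isLt j.isLt h2)).symm
      · rintro rfl
        have h3 : (d - 1) * (j : ℕ) + (j : ℕ) = d * (j : ℕ) := by
          have h4 : (d - 1) * (j : ℕ) = d * (j : ℕ) - (j : ℕ) := Nat.sub_one_mul d (j : ℕ)
          have hle : (j : ℕ) ≤ d * (j : ℕ) := Nat.le_mul_of_pos_left _ (by omega)
          omega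
        rw [h3, pow_mul, hωd, one_pow]
    by_cases hj : j = j'
    · rw [if_pos (hiff.mpr hj), if_pos hj, ← mul_assoc, hc]
      exact one_div_mul_cancel (by exact_mod_cast hd0)
    · rw [if_neg (fun h => hj (hiff.mp h)), if_neg hj, mul_zero, mul_zero]
  · rw [if_neg hA]
    simp only [hA, if_false]
    have hfact : ∀ a : Fin d,
        ∑ a' : Fin d, ω ^ ((d - 1) * ((a : ℕ) * (j : ℕ))) *
          (ω ^ ((a' : ℕ) * (j' : ℕ)) * (1 / (d : ℂ)))
        = ω ^ ((a : ℕ) * ((d - 1) * (j : ℕ))) *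
            ((if d ∣ (j' : ℕ) then (d : ℂ) else 0) * (1 / (d : ℂ))) := by
      intro a
      rw [← Finset.mul_sum, ← Finset.sum_mul, hsum]
      congr 2
      ring_nf
    rw [Finset.sum_congr rfl (fun a _ => hfact a), ← Finset.sum_mul, hsum]
    have hj'iff : d ∣ (j' : ℕ) ↔ (j' : ℕ) = 0 :=
      ⟨fun h => Nat.eq_zero_of_dvd_of_lt h j'.isLt, fun h => h ▸ dvd_zero d⟩
    have hjiff : d ∣ (d - 1) * (j : ℕ) ↔ (j : ℕ) = 0 := by
      constructor
      · intro h
        have hcop : Nat.Coprime d (d - 1) := by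
          have h1 : Nat.gcd d (d - 1) ∣ d - (d - 1) :=
            Nat.dvd_sub (Nat.gcd_dvd_left _ _) (Nat.gcd_dvd_right _ _)
          have h2 : d - (d - 1) = 1 := by omega
          rw [h2] at h1
          exact Nat.eq_one_of_dvd_one h1
        exact Nat.eq_zero_of_dvd_of_lt (hcop.dvd_of_dvd_mul_left h) j.isLt
      · intro h; rw [h, mul_zero]; exact dvd_zero d
    rw [← mul_assoc, hc]
    have hdC : (d : ℂ) ≠ 0 := by exact_mod_cast hd0
    by_cases hj : (j : ℕ) = 0 <;> by_cases hj' : (j' : ℕ) = 0 <;>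
      simp only [hjiff, hj'iff, hj, hj', if_true, if_false, and_true, and_false,
        false_and, and_self, mul_zero, zero_mul, dvd_zero] <;>
      field_simp
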